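/- (Lemma 5.) Assume Conditions 1, 2, 3 and 7, with d₀ as given by Lemma 1. Then there exists B < ∞ such that for all n, sup_{θ∈Θ} λ_max(R_θ) ≤ B and sup_{θ∈Θ} max_{1≤i≤p} λ_max((∂R/∂θ_i)(θ)) ≤ B, where λ_max denotes the largest eigenvalue of a symmetric matrix and (∂R/∂θ_i)(θ) := (∂K_θ/∂θ_i(f_j − f_k))_{1≤j,k≤n}. -/

import Mathlib

open scoped RealInnerProductSpace Matrix

/-- The covariance matrix `R_θ = (K_θ(f_i - f_j))_{1 ≤ i,j ≤ n}`. -/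
noncomputable def covMatrix {H : Type*} [NormedAddCommGroup H] [InnerProductSpace ℝ H]
    {p : ℕ} (K : EuclideanSpace ℝ (Fin p) → H → ℝ) (f : (n : ℕ) → Fin n → H)
    (n : ℕ) (θ : EuclideanSpace ℝ (Fin p)) : Matrix (Fin n) (Fin n) ℝ :=
  Matrix.of fun i j => K θ (f n i - f n j)

/-- The matrix `(∂R/∂θ_i)(θ) = (∂K_θ/∂θ_i (f_j - f_k))_{1 ≤ j,k ≤ n}`. -/
noncomputable def dCovMatrix {H : Type*} [NormedAddCommGroup H] [InnerProductSpace ℝ H]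
    {p : ℕ} (K : EuclideanSpace ℝ (Fin p) → H → ℝ) (f : (n : ℕ) → Fin n → H)
    (Θ : Set (EuclideanSpace ℝ (Fin p))) (θ : EuclideanSpace ℝ (Fin p))
    (n : ℕ) (i : Fin p) : Matrix (Fin n) (Fin n) ℝ :=
  Matrix.of fun j k =>
    fderivWithin ℝ (fun t => K t (f n j - f n k)) Θ θ (EuclideanSpace.single i 1)

/-- The largest eigenvalue of a symmetric matrix, as the supremum of the Rayleigh quotient
over the unit sphere. -/
noncomputable def lambdaMax {m : ℕ} (A : Matrix (Fin m) (Fin m) ℝ) : ℝ :=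
  sSup {r : ℝ | ∃ x : Fin m → ℝ, (∑ i, x i ^ 2) = 1 ∧ r = x ⬝ᵥ A.mulVec x}

section Aux
open Finset MeasureTheory Metric
open scoped ENNReal

lemma packing_card_le {d : ℕ} (hd : 0 < d) {Δ r : ℝ} (hΔ : 0 < Δ) (hr : 0 ≤ r)
    {n : ℕ} (v : Fin n → EuclideanSpace ℝ (Fin d)) (c : EuclideanSpace ℝ (Fin d))
    (hsep : ∀ i j : Fin n, i ≠ j → Δ ≤ dist (v i) (v j))
    (S : Finset (Fin n)) (hS : ∀ k ∈ S, dist (v k) c ≤ r) :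
    (S.card : ℝ) ≤ (2 * r / Δ + 1) ^ d := by
  haveI : Nontrivial (EuclideanSpace ℝ (Fin d)) := by
    apply Module.nontrivial_of_finrank_pos (R := ℝ)
    rw [finrank_euclideanSpace_fin]; exact hd
  set μ : Measure (EuclideanSpace ℝ (Fin d)) := volume
  have hb1 : μ (ball 0 1) ≠ 0 := (measure_ball_pos μ 0 one_pos).ne'
  have hb2 : μ (ball 0 1) ≠ ⊤ := measure_ball_lt_top.ne
  have hdisj : (S : Set (Fin n)).Pairwise (Function.onFun Disjoint fun k => ball (v k) (Δ / 2)) := by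
    intro i _ j _ hij
    apply ball_disjoint_ball
    rw [← add_div, add_self_div_two]
    exact hsep i j hij
  have hmeas : ∀ k ∈ S, MeasurableSet (ball (v k) (Δ / 2)) := fun k _ => measurableSet_ball
  have hsub : (⋃ k ∈ S, ball (v k) (Δ / 2)) ⊆ ball c (r + Δ / 2) := by
    intro x hx
    simp only [Set.mem_iUnion] at hx
    obtain ⟨k, hk, hxk⟩ := hx
    calc dist x c ≤ dist x (v k) + dist (v k) c := dist_triangle _ _ _
    _ < Δ / 2 + r := add_lt_add_of_lt_of_le (mem_ball.mp hxk) (hS k hk)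
    _ = r + Δ / 2 := by ring
  have key : (S.card : ℝ≥0∞) * μ (ball 0 (Δ / 2)) ≤ μ (ball 0 (r + Δ / 2)) := by
    calc (S.card : ℝ≥0∞) * μ (ball 0 (Δ / 2))
        = ∑ k ∈ S, μ (ball (v k) (Δ / 2)) := by
          rw [Finset.sum_congr rfl fun k _ => Measure.addHaar_ball_center μ (v k) (Δ/2),
            Finset.sum_const, nsmul_eq_mul]
    _ = μ (⋃ k ∈ S, ball (v k) (Δ / 2)) := (measure_biUnion_finset hdisj hmeas).symm
    _ ≤ μ (ball c (r + Δ / 2)) := measure_mono hsub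
    _ = μ (ball 0 (r + Δ / 2)) := Measure.addHaar_ball_center μ c _
  have hΔ2 : (0:ℝ) ≤ Δ / 2 := by positivity
  have hrΔ : (0:ℝ) ≤ r + Δ / 2 := by positivity
  rw [Measure.addHaar_ball _ _ hΔ2, Measure.addHaar_ball _ _ hrΔ, ← mul_assoc,
    ENNReal.mul_le_mul_iff_left hb1 hb2, finrank_euclideanSpace_fin,
    ← ENNReal.ofReal_natCast, ← ENNReal.ofReal_mul (by positivity),
    ENNReal.ofReal_le_ofReal_iff (by positivity)] at key
  have hpow : (0:ℝ) < (Δ / 2) ^ d := by positivity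
  rw [← le_div_iff₀ hpow] at key
  calc (S.card : ℝ) ≤ (r + Δ / 2) ^ d / (Δ / 2) ^ d := key
  _ = ((r + Δ / 2) / (Δ / 2)) ^ d := (div_pow _ _ _).symm
  _ = (2 * r / Δ + 1) ^ d := by
      congr 1
      field_simp

lemma rowsum_bound {d : ℕ} {Δ γ C : ℝ} (hΔ : 0 < Δ) (hγ : (d:ℝ) < γ) (hC : 0 ≤ C) :
    ∃ B : ℝ, 0 ≤ B ∧ ∀ (n : ℕ) (v : Fin n → EuclideanSpace ℝ (Fin d)),
      (∀ i j : Fin n, i ≠ j → Δ ≤ dist (v i) (v j)) →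
      ∀ i : Fin n, (∑ j, C / (1 + dist (v i) (v j) ^ γ)) ≤ B := by
  have hγ0 : 0 < γ := lt_of_le_of_lt (Nat.cast_nonneg d) hγ
  have hterm : ∀ t : ℝ, 0 ≤ t → C / (1 + t ^ γ) ≤ C := by
    intro t ht
    have h1 : (1:ℝ) ≤ 1 + t ^ γ := by
      have := Real.rpow_nonneg ht γ; linarith
    calc C / (1 + t ^ γ) ≤ C / 1 := by
          apply div_le_div_of_nonneg_left hC one_pos h1 |>.trans_eq rfl
    _ = C := div_one C
  rcases Nat.eq_zero_or_pos d with hd | hd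
  · -- d = 0 : space is a single point, so n ≤ 1
    refine ⟨C, hC, fun n v hsep i => ?_⟩
    subst hd
    haveI : Subsingleton (EuclideanSpace ℝ (Fin 0)) := by
      constructor; intro a b; ext m; exact absurd m.2 (by omega)
    have hn : ∀ j k : Fin n, j = k := by
      intro j k
      by_contra hjk
      have := hsep j k hjk
      rw [Subsingleton.elim (v j) (v k), dist_self] at this
      linarith
    haveI : Subsingleton (Fin n) := ⟨hn⟩
    rcases Finset.eq_empty_or_nonempty (univ : Finset (Fin n)) with h | ⟨j, hj⟩
    · rw [h, Finset.sum_empty]; exact hC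
    · have : (univ : Finset (Fin n)) = {j} := by
        apply Finset.eq_singleton_iff_unique_mem.mpr
        exact ⟨hj, fun k _ => hn k j⟩
      rw [this, Finset.sum_singleton]
      exact hterm _ dist_nonneg
  · -- d ≥ 1
    have hdR : (0:ℝ) < d := by exact_mod_cast hd
    set q : ℝ := γ / d with hqdef
    have hq : 1 < q := (one_lt_div hdR).mpr hγ
    set b : ℕ → ℝ := fun m => C / (1 + ((((m+1 : ℕ)):ℝ) ^ ((d:ℝ)⁻¹) - 1) ^ γ * (Δ/2) ^ γ) with hbdef
    have ha1 : ∀ m : ℕ, (1:ℝ) ≤ (((m+1 : ℕ)):ℝ) ^ ((d:ℝ)⁻¹) := by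
      intro m
      apply Real.one_le_rpow (by exact_mod_cast Nat.succ_le_succ (Nat.zero_le m)) (by positivity)
    have hb0 : ∀ m, 0 ≤ b m := by
      intro m
      apply div_nonneg hC
      have h1 : (0:ℝ) ≤ (((m+1 : ℕ)):ℝ) ^ ((d:ℝ)⁻¹) - 1 := by linarith [ha1 m]
      positivity
    have hbsum : Summable b := by
      rw [← summable_nat_add_iff (2^d)]
      have hsum2 : Summable (fun m : ℕ => ((((m + 1 : ℕ)):ℝ) ^ q)⁻¹) := by
        have := Real.summable_nat_rpow_inv.mpr hq
        exact (summable_nat_add_iff 1).mpr this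
      apply Summable.of_nonneg_of_le (fun m => hb0 _) _ (hsum2.mul_left (C * ((Δ/4) ^ γ)⁻¹))
      intro m
      -- for m' := m + 2^d : (m'+1) ≥ 2^d so (m'+1)^(1/d) ≥ 2
      set m' : ℕ := m + 2^d
      have h2d : (2:ℝ) ≤ (((m'+1 : ℕ)):ℝ) ^ ((d:ℝ)⁻¹) := by
        have h1 : ((2:ℝ) ^ d) ≤ ((m'+1 : ℕ) : ℝ) := by
          have : 2^d ≤ m' + 1 := by omega
          exact_mod_cast this.trans_eq rfl
        calc (2:ℝ) = ((2:ℝ) ^ (d:ℕ)) ^ ((d:ℝ)⁻¹) := by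
              rw [← Real.rpow_natCast 2 d, ← Real.rpow_mul (by norm_num),
                mul_inv_cancel₀ (by positivity), Real.rpow_one]
        _ ≤ (((m'+1 : ℕ)):ℝ) ^ ((d:ℝ)⁻¹) := by
              apply Real.rpow_le_rpow (by positivity) h1 (by positivity)
      set a : ℝ := (((m'+1 : ℕ)):ℝ) ^ ((d:ℝ)⁻¹) with hadef
      have haq : a ^ (d:ℝ) = ((m'+1 : ℕ) : ℝ) := by
        rw [hadef, ← Real.rpow_mul (by positivity), inv_mul_cancel₀ (by positivity),
          Real.rpow_one]
      have hsub : a / 2 ≤ a - 1 := by linarith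
      have hlow : (Δ/4) ^ γ * (((m'+1 : ℕ)):ℝ) ^ q ≤ (a - 1) ^ γ * (Δ/2) ^ γ := by
        have h1 : (Δ/4) * a = (a/2) * (Δ/2) := by ring
        have h2 : ((Δ/4) * a) ^ γ = (Δ/4) ^ γ * a ^ γ := by
          rw [Real.mul_rpow (by positivity) (by positivity)]
        have h3 : a ^ γ = (((m'+1 : ℕ)):ℝ) ^ q := by
          rw [hadef, ← Real.rpow_mul (by positivity), hqdef, inv_mul_eq_div]
        calc (Δ/4) ^ γ * (((m'+1 : ℕ)):ℝ) ^ q = ((Δ/4) * a) ^ γ := by rw [h2, h3]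
        _ = ((a/2) * (Δ/2)) ^ γ := by rw [h1]
        _ = (a/2) ^ γ * (Δ/2) ^ γ := Real.mul_rpow (by positivity) (by positivity)
        _ ≤ (a - 1) ^ γ * (Δ/2) ^ γ := by
            apply mul_le_mul_of_nonneg_right _ (by positivity)
            exact Real.rpow_le_rpow (by positivity) hsub (le_of_lt hγ0)
      have hY : (0:ℝ) < (Δ/4) ^ γ * (((m'+1 : ℕ)):ℝ) ^ q := by positivity
      have hstep : b m' ≤ C / ((Δ/4) ^ γ * (((m'+1 : ℕ)):ℝ) ^ q) := by
        apply div_le_div_of_nonneg_left hC hY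
        have h4 : (0:ℝ) ≤ (a - 1) ^ γ * (Δ/2) ^ γ := by
          have : (0:ℝ) ≤ a - 1 := by linarith
          positivity
        linarith [hlow]
      refine hstep.trans ?_
      rw [div_eq_mul_inv, mul_inv, ← mul_assoc]
      apply mul_le_mul_of_nonneg_left _ (by positivity)
      apply inv_anti₀ (by positivity)
      apply Real.rpow_le_rpow (by positivity) _ (le_of_lt (lt_trans one_pos hq))
      exact_mod_cast Nat.succ_le_succ (Nat.le_add_right m (2^d))
    refine ⟨∑' m, b m, tsum_nonneg hb0, fun n v hsep i => ?_⟩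
    classical
    set r : Fin n → ℝ := fun j => dist (v i) (v j) with hrdef
    set σ : Equiv.Perm (Fin n) := Tuple.sort r with hσdef
    have hmono : Monotone (r ∘ σ) := Tuple.monotone_sort r
    set w : Fin n → ℝ := r ∘ σ with hwdef
    have hw0 : ∀ m : Fin n, 0 ≤ w m := fun m => dist_nonneg
    have claim2 : ∀ m : Fin n, ((((m:ℕ)+1 : ℕ)):ℝ) ^ ((d:ℝ)⁻¹) - 1 ≤ 2 * w m / Δ := by
      intro m
      have claim1 : (((m:ℕ) + 1 : ℕ) : ℝ) ≤ (2 * w m / Δ + 1) ^ d := by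
        set S : Finset (Fin n) := univ.filter (fun k => dist (v k) (v i) ≤ w m) with hSdef
        have hsub : ∀ k ∈ Finset.Iic m, σ k ∈ S := by
          intro k hk
          simp only [hSdef, mem_filter, mem_univ, true_and]
          rw [dist_comm]
          exact hmono (Finset.mem_Iic.mp hk)
        have hcard : (m : ℕ) + 1 ≤ S.card := by
          have h5 := Finset.card_le_card_of_injOn σ hsub (σ.injective.injOn)
          rwa [Fin.card_Iic] at h5
        calc (((m:ℕ) + 1 : ℕ) : ℝ) ≤ (S.card : ℝ) := by exact_mod_cast hcard
        _ ≤ (2 * w m / Δ + 1) ^ d :=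
          packing_card_le hd hΔ (hw0 m) v (v i) hsep S (fun k hk => (mem_filter.mp hk).2)
      have h6 : (0:ℝ) ≤ 2 * w m / Δ + 1 := by
        have := hw0 m; positivity
      have h7 : ((((m:ℕ)+1 : ℕ)):ℝ) ^ ((d:ℝ)⁻¹) ≤ 2 * w m / Δ + 1 := by
        calc ((((m:ℕ)+1 : ℕ)):ℝ) ^ ((d:ℝ)⁻¹) ≤ ((2 * w m / Δ + 1) ^ d) ^ ((d:ℝ)⁻¹) :=
              Real.rpow_le_rpow (by positivity) claim1 (by positivity)
        _ = 2 * w m / Δ + 1 := by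
              rw [← Real.rpow_natCast (2 * w m / Δ + 1) d, ← Real.rpow_mul h6,
                mul_inv_cancel₀ (by positivity : (d:ℝ) ≠ 0), Real.rpow_one]
      linarith
    have hterm2 : ∀ m : Fin n, C / (1 + w m ^ γ) ≤ b (m : ℕ) := by
      intro m
      have h8 : ((((m:ℕ)+1 : ℕ)):ℝ) ^ ((d:ℝ)⁻¹) - 1 ≤ w m * (2 / Δ) := by
        have := claim2 m
        calc ((((m:ℕ)+1 : ℕ)):ℝ) ^ ((d:ℝ)⁻¹) - 1 ≤ 2 * w m / Δ := this
        _ = w m * (2 / Δ) := by ring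
      have h9 : (((((m:ℕ)+1 : ℕ)):ℝ) ^ ((d:ℝ)⁻¹) - 1) * (Δ/2) ≤ w m := by
        rw [← le_div_iff₀ (by positivity : (0:ℝ) < Δ/2)] at *
        calc (((((m:ℕ)+1 : ℕ)):ℝ) ^ ((d:ℝ)⁻¹) - 1) ≤ w m * (2/Δ) := h8
        _ = w m / (Δ/2) := by field_simp
      have h10 : (((((m:ℕ)+1 : ℕ)):ℝ) ^ ((d:ℝ)⁻¹) - 1) ^ γ * (Δ/2) ^ γ ≤ w m ^ γ := by
        have hnn : (0:ℝ) ≤ ((((m:ℕ)+1 : ℕ)):ℝ) ^ ((d:ℝ)⁻¹) - 1 := by linarith [ha1 (m:ℕ)]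
        calc (((((m:ℕ)+1 : ℕ)):ℝ) ^ ((d:ℝ)⁻¹) - 1) ^ γ * (Δ/2) ^ γ
            = ((((((m:ℕ)+1 : ℕ)):ℝ) ^ ((d:ℝ)⁻¹) - 1) * (Δ/2)) ^ γ :=
              (Real.mul_rpow hnn (by positivity)).symm
        _ ≤ w m ^ γ := Real.rpow_le_rpow (by positivity) h9 (le_of_lt hγ0)
      show C / (1 + w m ^ γ) ≤ C / (1 + (((((m:ℕ)+1 : ℕ)):ℝ) ^ ((d:ℝ)⁻¹) - 1) ^ γ * (Δ/2) ^ γ)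
      apply div_le_div_of_nonneg_left hC
      · have hnn : (0:ℝ) ≤ ((((m:ℕ)+1 : ℕ)):ℝ) ^ ((d:ℝ)⁻¹) - 1 := by linarith [ha1 (m:ℕ)]
        positivity
      · linarith
    calc (∑ j, C / (1 + dist (v i) (v j) ^ γ))
        = ∑ j, C / (1 + w j ^ γ) := (Equiv.sum_comp σ (fun j => C / (1 + r j ^ γ))).symm
    _ ≤ ∑ j : Fin n, b (j : ℕ) := Finset.sum_le_sum (fun j _ => hterm2 j)
    _ = ∑ j ∈ Finset.range n, b j := Fin.sum_univ_eq_sum_range b n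
    _ ≤ ∑' m, b m := hbsum.sum_le_tsum _ (fun m _ => hb0 m)


lemma rayleigh_le {n : ℕ} (A : Matrix (Fin n) (Fin n) ℝ) (B : ℝ)
    (hrow : ∀ i, (∑ j, |A i j|) ≤ B) (hcol : ∀ j, (∑ i, |A i j|) ≤ B)
    (x : Fin n → ℝ) (hx : (∑ i, x i ^ 2) = 1) : x ⬝ᵥ A.mulVec x ≤ B := by
  have habs : ∀ i j : Fin n, x i * (A i j * x j) ≤ |A i j| * ((x i ^ 2 + x j ^ 2) / 2) := by
    intro i j
    calc x i * (A i j * x j) ≤ |x i * (A i j * x j)| := le_abs_self _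
    _ = |A i j| * (|x i| * |x j|) := by rw [abs_mul, abs_mul]; ring
    _ ≤ |A i j| * ((x i ^ 2 + x j ^ 2) / 2) := by
        apply mul_le_mul_of_nonneg_left _ (abs_nonneg _)
        have h := two_mul_le_add_sq |x i| |x j|
        rw [sq_abs, sq_abs] at h
        linarith
  calc x ⬝ᵥ A.mulVec x = ∑ i, ∑ j, x i * (A i j * x j) := by
        simp [dotProduct, Matrix.mulVec, Finset.mul_sum]
  _ ≤ ∑ i, ∑ j, |A i j| * ((x i ^ 2 + x j ^ 2) / 2) :=
      Finset.sum_le_sum fun i _ => Finset.sum_le_sum fun j _ => habs i j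
  _ = (∑ i, x i ^ 2 / 2 * ∑ j, |A i j|) + (∑ j, x j ^ 2 / 2 * ∑ i, |A i j|) := by
      have e1 : ∀ i j : Fin n, |A i j| * ((x i ^ 2 + x j ^ 2) / 2)
          = x i ^ 2 / 2 * |A i j| + x j ^ 2 / 2 * |A i j| := by intro i j; ring
      simp_rw [e1, Finset.sum_add_distrib, ← Finset.mul_sum]
      congr 1
      rw [Finset.sum_comm]
      apply Finset.sum_congr rfl; intro j _
      rw [← Finset.mul_sum]
  _ ≤ (∑ i, x i ^ 2 / 2 * B) + (∑ j, x j ^ 2 / 2 * B) := by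
      apply add_le_add <;> apply Finset.sum_le_sum <;> intro i _ <;>
        apply mul_le_mul_of_nonneg_left _ (by positivity)
      · exact hrow i
      · exact hcol i
  _ = B := by
      rw [← Finset.sum_mul]
      have h2 : (∑ i, x i ^ 2 / 2) = 1 / 2 := by
        rw [← Finset.sum_div, hx]
      rw [h2]; ring

noncomputable def cvec {H : Type*} [NormedAddCommGroup H] [InnerProductSpace ℝ H]
    (e : ℕ → H) (d : ℕ) (x : H) : EuclideanSpace ℝ (Fin d) :=
  (WithLp.equiv 2 (Fin d → ℝ)).symm (fun m => ⟪x, e m⟫)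

lemma cvec_apply {H : Type*} [NormedAddCommGroup H] [InnerProductSpace ℝ H]
    (e : ℕ → H) (d : ℕ) (x : H) (m : Fin d) : cvec e d x m = ⟪x, e m⟫ := rfl

lemma dist_coord_sq {H : Type*} [NormedAddCommGroup H] [InnerProductSpace ℝ H]
    (e : ℕ → H) (d : ℕ) (x y : H) :
    dist (cvec e d x) (cvec e d y)
      = Real.sqrt (∑ k ∈ Finset.range d, ((⟪x, e k⟫ : ℝ) - ⟪y, e k⟫)^2) := by
  rw [EuclideanSpace.dist_eq]
  congr 1
  rw [← Fin.sum_univ_eq_sum_range (fun k => ((⟪x, e k⟫:ℝ) - ⟪y, e k⟫)^2) d]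
  apply Finset.sum_congr rfl; intro m _
  rw [cvec_apply, cvec_apply, Real.dist_eq, sq_abs]

lemma coordA {H : Type*} [NormedAddCommGroup H] [InnerProductSpace ℝ H]
    {e : ℕ → H} (he : Orthonormal ℝ e) (d : ℕ) (x y : H) :
    dist (cvec e d x) (cvec e d y) ≤ ‖x - y‖ := by
  rw [dist_coord_sq]
  have h1 : ∀ k : ℕ, ((⟪x, e k⟫ : ℝ) - ⟪y, e k⟫)^2 = ‖(⟪e k, x - y⟫ : ℝ)‖^2 := by
    intro k
    rw [inner_sub_right, real_inner_comm (e k) x, real_inner_comm (e k) y,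
      Real.norm_eq_abs, sq_abs]
  calc Real.sqrt (∑ k ∈ Finset.range d, ((⟪x, e k⟫ : ℝ) - ⟪y, e k⟫)^2)
      ≤ Real.sqrt (‖x - y‖^2) := by
        apply Real.sqrt_le_sqrt
        calc (∑ k ∈ Finset.range d, ((⟪x, e k⟫ : ℝ) - ⟪y, e k⟫)^2)
            = ∑ k ∈ Finset.range d, ‖(⟪e k, x - y⟫ : ℝ)‖^2 :=
              Finset.sum_congr rfl (fun k _ => h1 k)
        _ ≤ ‖x - y‖^2 := he.sum_inner_products_le (x - y)
  _ = ‖x - y‖ := Real.sqrt_sq (norm_nonneg _)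

lemma coordB {H : Type*} [NormedAddCommGroup H] [InnerProductSpace ℝ H]
    {e : ℕ → H} (he : Orthonormal ℝ e) (d : ℕ) (x y : H) :
    ‖(∑ k ∈ Finset.range d, (⟪x, e k⟫:ℝ) • e k) - ∑ k ∈ Finset.range d, (⟪y, e k⟫:ℝ) • e k‖
      = dist (cvec e d x) (cvec e d y) := by
  rw [dist_coord_sq, ← Finset.sum_sub_distrib]
  simp_rw [← sub_smul]
  have h2 : ‖∑ k ∈ Finset.range d, ((⟪x, e k⟫:ℝ) - ⟪y, e k⟫) • e k‖^2
      = ∑ k ∈ Finset.range d, ((⟪x, e k⟫:ℝ) - ⟪y, e k⟫)^2 := by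
    rw [← real_inner_self_eq_norm_sq,
      he.inner_sum (fun k => (⟪x, e k⟫:ℝ) - ⟪y, e k⟫) (fun k => (⟪x, e k⟫:ℝ) - ⟪y, e k⟫)]
    simp [pow_two]
  rw [← Real.sqrt_sq (norm_nonneg _), h2]

lemma lambdaMax_le {n : ℕ} (A : Matrix (Fin n) (Fin n) ℝ) (B : ℝ) (hB : 0 ≤ B)
    (h : ∀ x : Fin n → ℝ, (∑ i, x i ^ 2) = 1 → x ⬝ᵥ A.mulVec x ≤ B) : lambdaMax A ≤ B := by
  apply Real.sSup_le _ hB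
  rintro r ⟨x, hx, rfl⟩
  exact h x hx

/-- Uniform bound on row sums of a matrix with entries dominated by `C/(1+‖f_i-f_j‖^γ)`. -/
lemma matrix_lambdaMax_le {H : Type*} [NormedAddCommGroup H] [InnerProductSpace ℝ H]
    {e : ℕ → H} (he : Orthonormal ℝ e) {d : ℕ} {Δ γ C B : ℝ} (hΔ : 0 < Δ)
    (hγ : (d:ℝ) < γ) (hC : 0 ≤ C)
    (hB0 : 0 ≤ B)
    (hB : ∀ (n : ℕ) (v : Fin n → EuclideanSpace ℝ (Fin d)),
      (∀ i j : Fin n, i ≠ j → Δ ≤ dist (v i) (v j)) →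
      ∀ i : Fin n, (∑ j, C / (1 + dist (v i) (v j) ^ γ)) ≤ B)
    {n : ℕ} (g : Fin n → H)
    (hsep : ∀ i j : Fin n, i ≠ j → Δ ≤ dist (cvec e d (g i)) (cvec e d (g j)))
    (A : Matrix (Fin n) (Fin n) ℝ)
    (hA : ∀ i j, |A i j| ≤ C / (1 + ‖g i - g j‖ ^ γ)) :
    lambdaMax A ≤ B := by
  have hγ0 : 0 < γ := lt_of_le_of_lt (Nat.cast_nonneg d) hγ
  have hent : ∀ i j : Fin n, |A i j| ≤ C / (1 + dist (cvec e d (g i)) (cvec e d (g j)) ^ γ) := by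
    intro i j
    refine (hA i j).trans ?_
    have hdd : dist (cvec e d (g i)) (cvec e d (g j)) ≤ ‖g i - g j‖ := coordA he d _ _
    have h2 : 1 + dist (cvec e d (g i)) (cvec e d (g j)) ^ γ ≤ 1 + ‖g i - g j‖ ^ γ := by
      have := Real.rpow_le_rpow dist_nonneg hdd (le_of_lt hγ0)
      linarith
    apply div_le_div₀ hC le_rfl _ h2
    have := Real.rpow_nonneg (dist_nonneg (x := cvec e d (g i)) (y := cvec e d (g j))) γ
    linarith
  apply lambdaMax_le _ _ hB0
  intro x hx
  apply rayleigh_le _ _ _ _ x hx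
  · intro i
    calc (∑ j, |A i j|) ≤ ∑ j, C / (1 + dist (cvec e d (g i)) (cvec e d (g j)) ^ γ) :=
          Finset.sum_le_sum fun j _ => hent i j
    _ ≤ B := hB n (fun k => cvec e d (g k)) hsep i
  · intro j
    calc (∑ i, |A i j|) ≤ ∑ i, C / (1 + dist (cvec e d (g j)) (cvec e d (g i)) ^ γ) := by
          apply Finset.sum_le_sum
          intro i _
          rw [dist_comm]
          exact hent i j
    _ ≤ B := hB n (fun k => cvec e d (g k)) hsep j

end Aux

/-- Lemma 5: under Conditions 1, 2, 3 and 7 the largest eigenvalues of the covariance matrices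
`R_θ` and of their parameter-derivatives `(∂R/∂θ_i)(θ)` are uniformly bounded over `n` and
`θ ∈ Θ`. -/
theorem lambdaMax_uniformly_bounded
    {H : Type*} [NormedAddCommGroup H] [InnerProductSpace ℝ H] [CompleteSpace H]
    (e : HilbertBasis ℕ ℝ H)
    (f : (n : ℕ) → Fin n → H)
    {p : ℕ} (Θ : Set (EuclideanSpace ℝ (Fin p))) (hΘ : IsCompact Θ)
    (K : EuclideanSpace ℝ (Fin p) → H → ℝ)
    (hstat : ∀ θ ∈ Θ, ∀ g : H, K θ (-g) = K θ g)
    -- Condition 1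
    (Δ : ℝ) (hΔ : 0 < Δ)
    (hC1 : ∀ n, ∀ i j : Fin n, i ≠ j → 2 * Δ ≤ ‖f n i - f n j‖)
    -- Condition 2
    (J₀ : ℕ) (s : ℕ → ℝ) (hs0 : ∀ j, J₀ ≤ j → 0 ≤ s j)
    (hssum : Summable fun j : ℕ => s (J₀ + j) ^ 2)
    (hC2 : ∀ n, ∀ i : Fin n, ∀ j, J₀ ≤ j → |(⟪f n i, e j⟫)| ≤ s j)
    -- the integer d₀ given by Lemma 1
    (d₀ : ℕ) (hd₀J : J₀ ≤ d₀)
    (hd₀tail : ∑' k : ℕ, s (d₀ + 1 + k) ^ 2 < Δ ^ 2 / 16)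
    (hd₀sep : ∀ n, ∀ i j : Fin n, i ≠ j →
      Δ ≤ ‖(∑ k ∈ Finset.range d₀, ⟪f n i, e k⟫ • e k)
            - ∑ k ∈ Finset.range d₀, ⟪f n j, e k⟫ • e k‖)
    -- Condition 3
    (γ₀ : ℝ) (hγ₀ : (d₀ : ℝ) < γ₀) (C₀ : ℝ)
    (hC3 : ∀ θ ∈ Θ, ∀ g : H, |K θ g| ≤ C₀ / (1 + ‖g‖ ^ γ₀))
    -- Condition 7
    (hdiff : ∀ g : H, ContDiffOn ℝ 1 (fun θ => K θ g) Θ)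
    (γ₁ : ℝ) (hγ₁ : (d₀ : ℝ) < γ₁) (C₁ : ℝ)
    (hC7 : ∀ θ ∈ Θ, ∀ i : Fin p, ∀ g : H,
      |fderivWithin ℝ (fun t => K t g) Θ θ (EuclideanSpace.single i 1)| ≤ C₁ / (1 + ‖g‖ ^ γ₁)) :
    ∃ B : ℝ, ∀ n, ∀ θ ∈ Θ,
      lambdaMax (covMatrix K f n θ) ≤ B
      ∧ ∀ i : Fin p, lambdaMax (dCovMatrix K f Θ θ n i) ≤ B := by
  classical
  obtain ⟨B₀, hB₀0, hB₀⟩ := rowsum_bound (d := d₀) (C := max C₀ 0) hΔ hγ₀ (le_max_right _ _)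
  obtain ⟨B₁, hB₁0, hB₁⟩ := rowsum_bound (d := d₀) (C := max C₁ 0) hΔ hγ₁ (le_max_right _ _)
  have hsepv : ∀ n, ∀ i j : Fin n, i ≠ j →
      Δ ≤ dist (cvec e d₀ (f n i)) (cvec e d₀ (f n j)) := by
    intro n i j hij
    have h := hd₀sep n i j hij
    rwa [coordB e.orthonormal d₀ (f n i) (f n j)] at h
  refine ⟨max B₀ B₁, fun n θ hθ => ⟨?_, fun i => ?_⟩⟩
  · apply le_trans _ (le_max_left B₀ B₁)
    apply matrix_lambdaMax_le e.orthonormal hΔ hγ₀ (le_max_right C₀ 0) hB₀0 hB₀ (f n)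
      (hsepv n)
    intro i j
    refine (hC3 θ hθ (f n i - f n j)).trans ?_
    have hpos : 0 < 1 + ‖f n i - f n j‖ ^ γ₀ := by
      have := Real.rpow_nonneg (norm_nonneg (f n i - f n j)) γ₀; linarith
    exact div_le_div₀ (le_max_right C₀ 0) (le_max_left C₀ 0) hpos le_rfl
  · apply le_trans _ (le_max_right B₀ B₁)
    apply matrix_lambdaMax_le e.orthonormal hΔ hγ₁ (le_max_right C₁ 0) hB₁0 hB₁ (f n)
      (hsepv n)
    intro j k
    refine (hC7 θ hθ i (f n j - f n k)).trans ?_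
    have hpos : 0 < 1 + ‖f n j - f n k‖ ^ γ₁ := by
      have := Real.rpow_nonneg (norm_nonneg (f n j - f n k)) γ₁; linarith
    exact div_le_div₀ (le_max_right C₁ 0) (le_max_left C₁ 0) hpos le_rfl
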